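/- Let m, n be positive integers, d a divisor of m+n, and suppose E_+ is a subset of {0, d, 2d, ...} ∩ [0, n] containing n, E_- a subset of {d, 2d, ...} ∩ [1, m] containing m (support sets in the paper's notation, after relabeling). Define P = { i + j : i in E_+, j in E_-, i + j <= m + n - d }. Then |E_+| + |E_-| - 2 <= |P|. -/

import Mathlib

open Finset Pointwise

/-- Combinatorial core of Lemma 3.2: for finite sets `E₊ ⊆ {0, ..., n}` and
`E₋ ⊆ {1, ..., m}` of multiples of `d` with `n ∈ E₊` and `m ∈ E₋`, the
truncated sumset `P = {i + j : i ∈ E₊, j ∈ E₋, i + j ≤ m + n - d}` satisfies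
`|E₊| + |E₋| - 2 ≤ |P|`. -/
theorem sumset_lower_bound (m n d : ℕ) (hm : 0 < m) (hn : 0 < n) (hd : 0 < d)
    (hdvd : d ∣ m + n) (Ep Em : Finset ℕ)
    (hEp : ∀ x ∈ Ep, x ≤ n ∧ d ∣ x) (hnEp : n ∈ Ep)
    (hEm : ∀ x ∈ Em, 1 ≤ x ∧ x ≤ m ∧ d ∣ x) (hmEm : m ∈ Em) :
    Ep.card + Em.card ≤
      (((Ep ×ˢ Em).image fun p => p.1 + p.2).filter fun s => s ≤ m + n - d).card + 2 := by
  set S : Finset ℕ := (Ep ×ˢ Em).image fun p => p.1 + p.2 with hS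
  have hSdef : S = Ep + Em := by rw [Finset.add_def]
  -- Cauchy-Davenport: |S| ≥ |Ep| + |Em| - 1
  have hCD : Ep.card + Em.card - 1 ≤ S.card := by
    rw [hSdef]
    exact cauchy_davenport_add_of_linearOrder_isCancelAdd ⟨n, hnEp⟩ ⟨m, hmEm⟩
  -- S \ filter ⊆ {m+n}
  have hsub : S ⊆ (S.filter fun s => s ≤ m + n - d) ∪ {m + n} := by
    intro s hs
    simp only [hS, mem_image, mem_product] at hs
    obtain ⟨⟨i, j⟩, ⟨hi, hj⟩, rfl⟩ := hs
    obtain ⟨hin, hdi⟩ := hEp i hi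
    obtain ⟨-, hjm, hdj⟩ := hEm j hj
    by_cases h : i + j ≤ m + n - d
    · exact mem_union_left _ (mem_filter.2 ⟨mem_image.2 ⟨(i, j), mem_product.2 ⟨hi, hj⟩, rfl⟩, h⟩)
    · refine mem_union_right _ (mem_singleton.2 ?_)
      push_neg at h
      have hle : i + j ≤ m + n := by omega
      have hdij : d ∣ i + j := hdi.add hdj
      have : d ∣ (m + n) - (i + j) := (Nat.dvd_sub hdvd hdij)
      have hdle : d ≤ m + n := Nat.le_of_dvd (by omega) hdvd
      rcases Nat.eq_zero_or_pos ((m + n) - (i + j)) with h0 | h0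
      · omega
      · have := Nat.le_of_dvd h0 this
        omega
  have hcard : S.card ≤ (S.filter fun s => s ≤ m + n - d).card + 1 := by
    calc S.card ≤ ((S.filter fun s => s ≤ m + n - d) ∪ {m + n}).card := card_le_card hsub
    _ ≤ (S.filter fun s => s ≤ m + n - d).card + ({m + n} : Finset ℕ).card := card_union_le _ _
    _ = (S.filter fun s => s ≤ m + n - d).card + 1 := by simp
  have hpos : 0 < Ep.card := card_pos.2 ⟨n, hnEp⟩
  omega
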